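/- The marginal is the unique minimizer of the averaged rate term: Let μ be a probability measure on a measurable space X, let κ : X → Measure Z be a Markov kernel into a standard Borel (or countably generated) measurable space Z, and let m := μ.bind κ be the mixture (marginal) measure. Assume ∫_X D_KL(κ x ‖ m) dμ(x) < ∞. Then for every probability measure q on Z with q ≠ m and ∫_X D_KL(κ x ‖ q) dμ(x) < ∞, one has the strict inequality ∫_X D_KL(κ x ‖ q) dμ(x) > ∫_X D_KL(κ x ‖ m) dμ(x). Equivalently, equality of the two averaged divergences holds if and only if q = m. -/

import Mathlib

open MeasureTheory ProbabilityTheory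
open scoped ENNReal

/-- Kullback–Leibler divergence of `P` from `Q`: `∫ log (dP/dQ) dP` when `P ≪ Q`
(and the log-density is integrable), and `+∞` otherwise. -/
noncomputable def klDiv {α : Type*} [MeasurableSpace α] (P Q : Measure α) : ℝ≥0∞ :=
  open Classical in
  if P ≪ Q ∧ Integrable (fun a => Real.log ((P.rnDeriv Q a).toReal)) P
  then ENNReal.ofReal (∫ a, Real.log ((P.rnDeriv Q a).toReal) ∂P)
  else ⊤

section Helpers

variable {Z : Type*} [MeasurableSpace Z]


/-- pointwise bound used for negative part -/
lemma mul_ofReal_neg_log_le (r : ℝ≥0∞) : r * ENNReal.ofReal (-Real.log r.toReal) ≤ 1 := by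
  rcases eq_or_ne r 0 with h | h0
  · simp [h]
  rcases eq_or_ne r ⊤ with h | htop
  · simp [h]
  have ht : 0 < r.toReal := ENNReal.toReal_pos h0 htop
  have h1 : -Real.log r.toReal ≤ (r.toReal)⁻¹ := by
    have := Real.log_le_sub_one_of_pos (inv_pos.mpr ht)
    rw [Real.log_inv] at this
    linarith
  calc r * ENNReal.ofReal (-Real.log r.toReal)
      ≤ r * ENNReal.ofReal (r.toReal)⁻¹ := by
        exact mul_le_mul_right (ENNReal.ofReal_le_ofReal h1) r
    _ = ENNReal.ofReal r.toReal * ENNReal.ofReal (r.toReal)⁻¹ := by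
        rw [ENNReal.ofReal_toReal htop]
    _ = ENNReal.ofReal (r.toReal * (r.toReal)⁻¹) := by
        rw [ENNReal.ofReal_mul ht.le]
    _ = 1 := by rw [mul_inv_cancel₀ ht.ne']; simp

/-- negative-part bound -/
lemma lintegral_ofReal_neg_llr_le (P Q : Measure Z) [IsFiniteMeasure P] [IsProbabilityMeasure Q]
    (h : P ≪ Q) : ∫⁻ z, ENNReal.ofReal (-llr P Q z) ∂P ≤ 1 := by
  have hmeas : Measurable fun z => ENNReal.ofReal (-llr P Q z) :=
    ((measurable_llr P Q).neg).ennreal_ofReal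
  rw [← lintegral_rnDeriv_mul h hmeas.aemeasurable]
  calc ∫⁻ z, P.rnDeriv Q z * ENNReal.ofReal (-llr P Q z) ∂Q
      ≤ ∫⁻ _, 1 ∂Q := by
        refine lintegral_mono fun z => ?_
        exact mul_ofReal_neg_log_le (P.rnDeriv Q z)
    _ = 1 := by simp

/-- positive-part bound -/
lemma lintegral_ofReal_llr_le (P Q : Measure Z) [IsProbabilityMeasure P] [IsProbabilityMeasure Q]
    (h : P ≪ Q) (hi : Integrable (llr P Q) P) :
    ∫⁻ z, ENNReal.ofReal (llr P Q z) ∂P ≤ ENNReal.ofReal (∫ z, llr P Q z ∂P) + 1 := by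
  set A := ∫⁻ z, ENNReal.ofReal (llr P Q z) ∂P with hA
  set B := ∫⁻ z, ENNReal.ofReal (-llr P Q z) ∂P with hB
  have hB1 : B ≤ 1 := lintegral_ofReal_neg_llr_le P Q h
  have hBtop : B ≠ ⊤ := (hB1.trans_lt ENNReal.one_lt_top).ne
  have hAtop : A ≠ ⊤ := by
    refine (lt_of_le_of_lt (lintegral_mono fun z => ?_) hi.2).ne
    rw [← ofReal_norm]
    exact ENNReal.ofReal_le_ofReal (le_abs_self _)
  have hint : ∫ z, llr P Q z ∂P = A.toReal - B.toReal :=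
    integral_eq_lintegral_pos_part_sub_lintegral_neg_part hi
  have : A = ENNReal.ofReal (∫ z, llr P Q z ∂P + B.toReal) := by
    rw [hint, sub_add_cancel, ENNReal.ofReal_toReal hAtop]
  rw [this]
  refine (ENNReal.ofReal_add_le).trans ?_
  gcongr
  rw [ENNReal.ofReal_toReal hBtop]
  exact hB1

/-- Gibbs inequality (nonnegativity) -/
lemma integral_llr_nonneg' (P Q : Measure Z) [IsProbabilityMeasure P] [IsProbabilityMeasure Q]
    (h : P ≪ Q) (hi : Integrable (llr P Q) P) : 0 ≤ ∫ z, llr P Q z ∂P := by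
  set g : Z → ℝ := fun z => ((P.rnDeriv Q z).toReal)⁻¹ with hg
  have hgmeas : Measurable g := (Measure.measurable_rnDeriv P Q).ennreal_toReal.inv
  have hpos : ∀ᵐ z ∂P, 0 < (P.rnDeriv Q z).toReal ∧ P.rnDeriv Q z < ⊤ := by
    filter_upwards [Measure.rnDeriv_pos h, (Measure.rnDeriv_lt_top P Q).filter_mono h.ae_le] with z h1 h2
    exact ⟨ENNReal.toReal_pos h1.ne' h2.ne, h2⟩
  have hlin : ∫⁻ z, ENNReal.ofReal (g z) ∂P ≤ 1 := by
    have heq : ∫⁻ z, ENNReal.ofReal (g z) ∂P = ∫⁻ z, (P.rnDeriv Q z)⁻¹ ∂P := by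
      refine lintegral_congr_ae ?_
      filter_upwards [hpos] with z hz
      show ENNReal.ofReal (((P.rnDeriv Q z).toReal)⁻¹) = _
      rw [ENNReal.ofReal_inv_of_pos hz.1, ENNReal.ofReal_toReal hz.2.ne]
    rw [heq, ← lintegral_rnDeriv_mul h (f := fun z => (P.rnDeriv Q z)⁻¹) (Measure.measurable_rnDeriv P Q).inv.aemeasurable]
    calc ∫⁻ z, P.rnDeriv Q z * (P.rnDeriv Q z)⁻¹ ∂Q ≤ ∫⁻ _, 1 ∂Q :=
          lintegral_mono fun z => ENNReal.mul_inv_le_one _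
      _ = 1 := by simp
  have hgint : Integrable g P := by
    refine ⟨hgmeas.aestronglyMeasurable, ?_⟩
    refine lt_of_le_of_lt (le_of_eq ?_) (hlin.trans_lt ENNReal.one_lt_top)
    refine lintegral_congr_ae (ae_of_all _ fun z => ?_)
    exact Real.enorm_eq_ofReal (by positivity)
  have hmono : ∫ z, -llr P Q z ∂P ≤ ∫ z, (g z - 1) ∂P := by
    refine integral_mono_ae hi.neg (hgint.sub (integrable_const 1)) ?_
    filter_upwards [hpos] with z hz
    have := Real.log_le_sub_one_of_pos (inv_pos.mpr hz.1)
    rw [Real.log_inv] at this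
    simpa [llr, hg] using this
  have hgle : ∫ z, g z ∂P ≤ 1 := by
    rw [integral_eq_lintegral_of_nonneg_ae (ae_of_all _ fun z => by positivity)
      hgmeas.aestronglyMeasurable]
    calc (∫⁻ z, ENNReal.ofReal (g z) ∂P).toReal ≤ (1 : ℝ≥0∞).toReal :=
          ENNReal.toReal_mono ENNReal.one_ne_top hlin
      _ = 1 := by simp
  have : ∫ z, -llr P Q z ∂P ≤ 0 := by
    rw [integral_sub hgint (integrable_const 1)] at hmono
    simp only [integral_const, probReal_univ, ENNReal.toReal_one, smul_eq_mul, one_mul] at hmono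
    linarith
  rw [integral_neg] at this
  linarith

/-- Strict Gibbs inequality -/
lemma integral_llr_pos (P Q : Measure Z) [IsProbabilityMeasure P] [IsProbabilityMeasure Q]
    (h : P ≪ Q) (hi : Integrable (llr P Q) P) (hne : P ≠ Q) : 0 < ∫ z, llr P Q z ∂P := by
  rcases lt_or_eq_of_le (integral_llr_nonneg' P Q h hi) with hlt | heq
  · exact hlt
  exfalso
  -- equality case: show P = Q
  set r : Z → ℝ≥0∞ := P.rnDeriv Q with hr
  have hrmeas : Measurable r := Measure.measurable_rnDeriv P Q
  set g : Z → ℝ := fun z => ((r z).toReal)⁻¹ with hg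
  have hgmeas : Measurable g := hrmeas.ennreal_toReal.inv
  have hpos : ∀ᵐ z ∂P, 0 < (r z).toReal ∧ r z < ⊤ := by
    filter_upwards [Measure.rnDeriv_pos h, (Measure.rnDeriv_lt_top P Q).filter_mono h.ae_le]
      with z h1 h2
    exact ⟨ENNReal.toReal_pos h1.ne' h2.ne, h2⟩
  have hlineq : ∫⁻ z, ENNReal.ofReal (g z) ∂P = ∫⁻ z, r z * (r z)⁻¹ ∂Q := by
    have heq : ∫⁻ z, ENNReal.ofReal (g z) ∂P = ∫⁻ z, (r z)⁻¹ ∂P := by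
      refine lintegral_congr_ae ?_
      filter_upwards [hpos] with z hz
      show ENNReal.ofReal (((r z).toReal)⁻¹) = _
      rw [ENNReal.ofReal_inv_of_pos hz.1, ENNReal.ofReal_toReal hz.2.ne]
    rw [heq, ← lintegral_rnDeriv_mul h (f := fun z => (r z)⁻¹) hrmeas.inv.aemeasurable]
  have hlin : ∫⁻ z, ENNReal.ofReal (g z) ∂P ≤ 1 := by
    rw [hlineq]
    calc ∫⁻ z, r z * (r z)⁻¹ ∂Q ≤ ∫⁻ _, 1 ∂Q :=
          lintegral_mono fun z => ENNReal.mul_inv_le_one _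
      _ = 1 := by simp
  have hgint : Integrable g P := by
    refine ⟨hgmeas.aestronglyMeasurable, ?_⟩
    refine lt_of_le_of_lt (le_of_eq ?_) (hlin.trans_lt ENNReal.one_lt_top)
    refine lintegral_congr_ae (ae_of_all _ fun z => ?_)
    exact Real.enorm_eq_ofReal (by positivity)
  -- h0 : the function g - 1 + llr is a.e. nonneg with nonpositive integral
  set hfun : Z → ℝ := fun z => g z - 1 + llr P Q z with hhfun
  have hfint : Integrable hfun P := (hgint.sub (integrable_const 1)).add hi
  have hfnonneg : ∀ᵐ z ∂P, 0 ≤ hfun z := by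
    filter_upwards [hpos] with z hz
    have hlog := Real.log_le_sub_one_of_pos (inv_pos.mpr hz.1)
    rw [Real.log_inv] at hlog
    have : -llr P Q z ≤ g z - 1 := by simpa [llr, hg] using hlog
    simp only [hhfun]; linarith
  have hgle : ∫ z, g z ∂P ≤ 1 := by
    rw [integral_eq_lintegral_of_nonneg_ae (ae_of_all _ fun z => by positivity)
      hgmeas.aestronglyMeasurable]
    calc (∫⁻ z, ENNReal.ofReal (g z) ∂P).toReal ≤ (1 : ℝ≥0∞).toReal :=
          ENNReal.toReal_mono ENNReal.one_ne_top hlin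
      _ = 1 := by simp
  have h1int : Integrable (fun z => g z - 1) P := hgint.sub (integrable_const 1)
  have hsplit : ∫ z, hfun z ∂P = (∫ z, g z ∂P) - 1 + ∫ z, llr P Q z ∂P := by
    rw [hhfun, integral_add h1int hi, integral_sub hgint (integrable_const 1)]
    simp
  have hfintval : ∫ z, hfun z ∂P ≤ 0 := by
    rw [hsplit, ← heq]
    linarith
  have hfzero : hfun =ᵐ[P] 0 := by
    have h1 : ∫ z, hfun z ∂P = 0 :=
      le_antisymm hfintval (integral_nonneg_of_ae hfnonneg)
    exact (integral_eq_zero_iff_of_nonneg_ae hfnonneg hfint).mp h1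
  -- deduce r = 1 P-a.e.
  have hr1P : ∀ᵐ z ∂P, r z = 1 := by
    filter_upwards [hfzero, hpos] with z hz hz2
    have hgz : g z - 1 = -llr P Q z → g z = 1 → True := fun _ _ => trivial
    -- from hfun z = 0 : g z - 1 = - llr P Q z, i.e. log (g z) = g z - 1
    have hzero : g z - 1 + Real.log ((r z).toReal) = 0 := hz
    have hlogg : Real.log (g z) = g z - 1 := by
      rw [hg]; simp only
      rw [Real.log_inv]
      linarith
    have hgpos : (0:ℝ) < g z := inv_pos.mpr hz2.1
    have hgz1 : g z = 1 := by
      by_contra hne1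
      have := Real.log_lt_sub_one_of_pos hgpos hne1
      linarith
    have : (r z).toReal = 1 := inv_eq_one.mp hgz1
    rw [← ENNReal.ofReal_toReal hz2.2.ne, this]; simp
  -- ∫ g dP = 1, hence r * r⁻¹ = 1 Q-a.e., hence r ≠ 0 Q-a.e.
  have hgeq : ∫ z, g z ∂P = 1 := by
    have h1 : ∫ z, hfun z ∂P = 0 := le_antisymm hfintval (integral_nonneg_of_ae hfnonneg)
    rw [hsplit, ← heq] at h1
    linarith
  have hlin1 : ∫⁻ z, r z * (r z)⁻¹ ∂Q = 1 := by
    rw [← hlineq]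
    have hnn : 0 ≤ᵐ[P] g := ae_of_all _ fun z => by positivity
    rw [integral_eq_lintegral_of_nonneg_ae hnn hgmeas.aestronglyMeasurable] at hgeq
    rw [← ENNReal.ofReal_toReal (hlin.trans_lt ENNReal.one_lt_top).ne, hgeq]
    simp
  have hrne0 : ∀ᵐ z ∂Q, r z * (r z)⁻¹ = 1 := by
    have hle : ∀ z, r z * (r z)⁻¹ ≤ 1 := fun z => ENNReal.mul_inv_le_one _
    have hmeas2 : Measurable fun z => r z * (r z)⁻¹ := hrmeas.mul hrmeas.inv
    have hsub : ∫⁻ z, (1 - r z * (r z)⁻¹) ∂Q = 0 := by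
      rw [lintegral_sub hmeas2 (by rw [hlin1]; exact ENNReal.one_ne_top)
        (ae_of_all _ hle), hlin1]
      simp
    have := (lintegral_eq_zero_iff (measurable_const.sub hmeas2)).mp hsub
    filter_upwards [this] with z hz
    have : (1 : ℝ≥0∞) ≤ r z * (r z)⁻¹ := by
      simpa [tsub_eq_zero_iff_le] using hz
    exact le_antisymm (hle z) this
  -- r = 1 Q-a.e.
  have hr1Q : ∀ᵐ z ∂Q, r z = 1 := by
    have hSmeas : MeasurableSet {z | r z ≠ 1} := (hrmeas (measurableSet_singleton 1)).compl
    have hP0 : P {z | r z ≠ 1} = 0 := by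
      rw [← ae_iff]; exact hr1P
    have hPset : ∫⁻ z in {z | r z ≠ 1}, r z ∂Q = 0 := by
      exact (Measure.setLIntegral_rnDeriv h _).trans hP0
    have hr0 : ∀ᵐ z ∂Q, z ∈ {z | r z ≠ 1} → r z = 0 := by
      have := (setLIntegral_eq_zero_iff hSmeas hrmeas).mp hPset
      filter_upwards [this] with z hz hz2
      exact hz hz2
    filter_upwards [hr0, hrne0] with z h1 h2
    by_contra hne1
    rw [h1 hne1] at h2
    simp at h2
  -- conclude P = Q
  apply hne
  calc P = Q.withDensity r := (Measure.withDensity_rnDeriv_eq P Q h).symm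
    _ = Q.withDensity 1 := withDensity_congr_ae hr1Q
    _ = Q := by simp

lemma measurable_klDiv {X : Type*} [MeasurableSpace X] [MeasurableSpace.CountablyGenerated Z]
    (κ : Kernel X Z) [IsFiniteKernel κ] (q : Measure Z) [IsFiniteMeasure q] :
    Measurable (fun x => klDiv (κ x) q) := by
  classical
  set η : Kernel X Z := Kernel.const X q with hη
  set L : X → Z → ℝ := fun x z => Real.log ((κ.rnDeriv η x z).toReal) with hLdef
  have hLmeas : Measurable (Function.uncurry L) :=
    (Kernel.measurable_rnDeriv κ η).ennreal_toReal.log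
  have hN : Measurable fun x => ∫⁻ z, (‖L x z‖₊ : ℝ≥0∞) ∂(κ x) :=
    Measurable.lintegral_kernel_prod_right (f := fun x z => (‖L x z‖₊ : ℝ≥0∞)) hLmeas.enorm
  have hI : Measurable fun x => ∫ z, L x z ∂(κ x) :=
    hLmeas.stronglyMeasurable.integral_kernel_prod_right.measurable
  have hA : MeasurableSet {x | κ x ≪ q} := by
    have := Kernel.measurableSet_absolutelyContinuous κ η
    simpa [hη] using this
  have key : (fun x => klDiv (κ x) q) = fun x =>
      if x ∈ {x | κ x ≪ q} ∩ {x | ∫⁻ z, (‖L x z‖₊ : ℝ≥0∞) ∂(κ x) < ⊤}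
      then ENNReal.ofReal (∫ z, L x z ∂(κ x)) else ⊤ := by
    funext x
    by_cases hac : κ x ≪ q
    · have hae : (fun z => Real.log (((κ x).rnDeriv q z).toReal)) =ᵐ[κ x] L x := by
        have h1 : κ.rnDeriv η x =ᵐ[q] (κ x).rnDeriv q := by
          simpa [hη] using (Kernel.rnDeriv_eq_rnDeriv_measure (κ := κ) (η := η) (a := x))
        filter_upwards [hac.ae_le h1] with z hz
        rw [hLdef]
        simp only
        rw [hz]
      have hLx : Measurable (L x) := hLmeas.comp measurable_prodMk_left
      have hiff : Integrable (fun z => Real.log (((κ x).rnDeriv q z).toReal)) (κ x) ↔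
          ∫⁻ z, (‖L x z‖₊ : ℝ≥0∞) ∂(κ x) < ⊤ := by
        rw [integrable_congr hae]
        exact ⟨fun h => h.2, fun h => ⟨hLx.aestronglyMeasurable, h⟩⟩
      simp only [klDiv, Set.mem_inter_iff, Set.mem_setOf_eq]
      by_cases hint : ∫⁻ z, (‖L x z‖₊ : ℝ≥0∞) ∂(κ x) < ⊤
      · rw [if_pos ⟨hac, hiff.mpr hint⟩, if_pos ⟨hac, hint⟩]
        exact congrArg ENNReal.ofReal (integral_congr_ae hae)
      · rw [if_neg (fun hcond => hint (hiff.mp hcond.2)), if_neg (fun hcond => hint hcond.2)]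
    · simp only [klDiv, Set.mem_inter_iff, Set.mem_setOf_eq]
      rw [if_neg (fun hcond => hac hcond.1), if_neg (fun hcond => hac hcond.1)]
  rw [key]
  exact Measurable.ite (hA.inter (hN measurableSet_Iio)) hI.ennreal_ofReal measurable_const

lemma klDiv_eq_of {α : Type*} [MeasurableSpace α] {P Q : Measure α} (h : P ≪ Q)
    (hi : Integrable (llr P Q) P) :
    klDiv P Q = ENNReal.ofReal (∫ z, llr P Q z ∂P) := by
  simp only [klDiv]
  rw [if_pos ⟨h, hi⟩]
  rfl

lemma klDiv_prop_of_lt_top {α : Type*} [MeasurableSpace α] {P Q : Measure α}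
    (h : klDiv P Q < ⊤) : P ≪ Q ∧ Integrable (llr P Q) P := by
  simp only [klDiv] at h
  by_contra hc
  rw [if_neg (fun hcond => hc ⟨hcond.1, hcond.2⟩)] at h
  exact lt_irrefl ⊤ h


end Helpers

/-- The marginal `m = μ.bind κ` is the unique minimizer of the averaged rate term:
any probability measure `q ≠ m` with finite averaged divergence yields a strictly larger
averaged KL divergence. -/
theorem marginal_unique_minimizer_of_averaged_rate
    {X Z : Type*} [MeasurableSpace X] [MeasurableSpace Z] [StandardBorelSpace Z]
    (μ : Measure X) [IsProbabilityMeasure μ]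
    (κ : Kernel X Z) [IsMarkovKernel κ]
    (m : Measure Z) (hm : m = μ.bind (fun x => κ x))
    (hfin : ∫⁻ x, klDiv (κ x) m ∂μ < ⊤) :
    ∀ q : Measure Z, IsProbabilityMeasure q → q ≠ m →
      ∫⁻ x, klDiv (κ x) q ∂μ < ⊤ →
      ∫⁻ x, klDiv (κ x) q ∂μ > ∫⁻ x, klDiv (κ x) m ∂μ := by
  intro q hqP hqm hqfin
  classical
  have hmuniv : m Set.univ = 1 := by
    rw [hm, Measure.bind_apply MeasurableSet.univ κ.measurable.aemeasurable]
    simp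
  have hmP : IsProbabilityMeasure m := ⟨hmuniv⟩
  have hMq : Measurable fun x => klDiv (κ x) q := measurable_klDiv κ q
  have hMm : Measurable fun x => klDiv (κ x) m := measurable_klDiv κ m
  have haem : ∀ᵐ x ∂μ, κ x ≪ m ∧ Integrable (llr (κ x) m) (κ x) := by
    filter_upwards [ae_lt_top hMm hfin.ne] with x hx
    exact klDiv_prop_of_lt_top hx
  have haeq : ∀ᵐ x ∂μ, κ x ≪ q ∧ Integrable (llr (κ x) q) (κ x) := by
    filter_upwards [ae_lt_top hMq hqfin.ne] with x hx
    exact klDiv_prop_of_lt_top hx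
  -- m ≪ q
  have hmq : m ≪ q := by
    refine Measure.AbsolutelyContinuous.mk fun S hS hqS => ?_
    rw [hm, Measure.bind_apply hS κ.measurable.aemeasurable]
    have h0 : ∀ᵐ x ∂μ, κ x S = 0 := by
      filter_upwards [haeq] with x hx
      exact hx.1 hqS
    rw [lintegral_congr_ae h0, lintegral_zero]
  -- chain rule for llr
  have hchain : ∀ᵐ x ∂μ, ∀ᵐ z ∂(κ x), llr (κ x) q z = llr (κ x) m z + llr m q z := by
    filter_upwards [haeq, haem] with x hxq hxm
    have hmul : (κ x).rnDeriv m * m.rnDeriv q =ᵐ[κ x] (κ x).rnDeriv q :=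
      hxq.1.ae_le (Measure.rnDeriv_mul_rnDeriv hxm.1)
    have h1 : ∀ᵐ z ∂(κ x), 0 < (κ x).rnDeriv m z := Measure.rnDeriv_pos hxm.1
    have h2 : ∀ᵐ z ∂(κ x), (κ x).rnDeriv m z < ⊤ :=
      (Measure.rnDeriv_lt_top (κ x) m).filter_mono hxm.1.ae_le
    have h3 : ∀ᵐ z ∂(κ x), 0 < m.rnDeriv q z :=
      (Measure.rnDeriv_pos hmq).filter_mono hxm.1.ae_le
    have h4 : ∀ᵐ z ∂(κ x), m.rnDeriv q z < ⊤ :=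
      (Measure.rnDeriv_lt_top m q).filter_mono hxq.1.ae_le
    filter_upwards [hmul, h1, h2, h3, h4] with z hz hp1 hl1 hp2 hl2
    simp only [llr]
    rw [← hz, Pi.mul_apply, ENNReal.toReal_mul,
      Real.log_mul (ENNReal.toReal_pos hp1.ne' hl1.ne).ne' (ENNReal.toReal_pos hp2.ne' hl2.ne).ne']
  -- integrability of llr m q w.r.t. κ x
  have hintc : ∀ᵐ x ∂μ, Integrable (llr m q) (κ x) := by
    filter_upwards [haeq, haem, hchain] with x hxq hxm hch
    refine (hxq.2.sub hxm.2).congr ?_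
    filter_upwards [hch] with z hz
    simp only [Pi.sub_apply]
    rw [hz]; ring
  have hbindgen : ∀ (g : Z → ℝ≥0∞), Measurable g →
      ∫⁻ z, g z ∂m = ∫⁻ x, ∫⁻ z, g z ∂(κ x) ∂μ := by
    intro g hg
    rw [hm]
    exact Measure.lintegral_bind κ.measurable.aemeasurable hg.aemeasurable
  -- the Cp / Cn functions
  set Cp : X → ℝ≥0∞ := fun x => ∫⁻ z, ENNReal.ofReal (llr m q z) ∂(κ x) with hCpdef
  set Cn : X → ℝ≥0∞ := fun x => ∫⁻ z, ENNReal.ofReal (-llr m q z) ∂(κ x) with hCndef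
  have hmeasp : Measurable fun z => ENNReal.ofReal (llr m q z) :=
    (measurable_llr m q).ennreal_ofReal
  have hmeasn : Measurable fun z => ENNReal.ofReal (-llr m q z) :=
    (measurable_llr m q).neg.ennreal_ofReal
  set Pp := ∫⁻ z, ENNReal.ofReal (llr m q z) ∂m with hPpdef
  set Nn := ∫⁻ z, ENNReal.ofReal (-llr m q z) ∂m with hNndef
  have hPbind : Pp = ∫⁻ x, Cp x ∂μ := hbindgen _ hmeasp
  have hNbind : Nn = ∫⁻ x, Cn x ∂μ := hbindgen _ hmeasn
  have hNle : Nn ≤ 1 := lintegral_ofReal_neg_llr_le m q hmq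
  -- bounds on Cp and Cn
  have hCpbound : ∀ᵐ x ∂μ, Cp x ≤ klDiv (κ x) q + 2 := by
    filter_upwards [haeq, haem, hchain] with x hxq hxm hch
    have hptw : ∀ᵐ z ∂(κ x), ENNReal.ofReal (llr m q z) ≤
        ENNReal.ofReal (llr (κ x) q z) + ENNReal.ofReal (-llr (κ x) m z) := by
      filter_upwards [hch] with z hz
      have : llr m q z = llr (κ x) q z + -llr (κ x) m z := by rw [hz]; ring
      rw [this]
      exact ENNReal.ofReal_add_le
    calc Cp x ≤ ∫⁻ z, (ENNReal.ofReal (llr (κ x) q z) + ENNReal.ofReal (-llr (κ x) m z)) ∂(κ x) :=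
          lintegral_mono_ae hptw
      _ = (∫⁻ z, ENNReal.ofReal (llr (κ x) q z) ∂(κ x))
          + ∫⁻ z, ENNReal.ofReal (-llr (κ x) m z) ∂(κ x) :=
          lintegral_add_left ((measurable_llr _ _).ennreal_ofReal) _
      _ ≤ (ENNReal.ofReal (∫ z, llr (κ x) q z ∂(κ x)) + 1) + 1 := by
          gcongr
          · exact lintegral_ofReal_llr_le (κ x) q hxq.1 hxq.2
          · exact lintegral_ofReal_neg_llr_le (κ x) m hxm.1
      _ = klDiv (κ x) q + 2 := by
          rw [klDiv_eq_of hxq.1 hxq.2]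
          ring
  have hCnbound : ∀ᵐ x ∂μ, Cn x ≤ klDiv (κ x) m + 2 := by
    filter_upwards [haeq, haem, hchain] with x hxq hxm hch
    have hptw : ∀ᵐ z ∂(κ x), ENNReal.ofReal (-llr m q z) ≤
        ENNReal.ofReal (llr (κ x) m z) + ENNReal.ofReal (-llr (κ x) q z) := by
      filter_upwards [hch] with z hz
      have : -llr m q z = llr (κ x) m z + -llr (κ x) q z := by rw [hz]; ring
      rw [this]
      exact ENNReal.ofReal_add_le
    calc Cn x ≤ ∫⁻ z, (ENNReal.ofReal (llr (κ x) m z) + ENNReal.ofReal (-llr (κ x) q z)) ∂(κ x) :=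
          lintegral_mono_ae hptw
      _ = (∫⁻ z, ENNReal.ofReal (llr (κ x) m z) ∂(κ x))
          + ∫⁻ z, ENNReal.ofReal (-llr (κ x) q z) ∂(κ x) :=
          lintegral_add_left ((measurable_llr _ _).ennreal_ofReal) _
      _ ≤ (ENNReal.ofReal (∫ z, llr (κ x) m z ∂(κ x)) + 1) + 1 := by
          gcongr
          · exact lintegral_ofReal_llr_le (κ x) m hxm.1 hxm.2
          · exact lintegral_ofReal_neg_llr_le (κ x) q hxq.1
      _ = klDiv (κ x) m + 2 := by
          rw [klDiv_eq_of hxm.1 hxm.2]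
          ring
  have hCplt : ∀ᵐ x ∂μ, Cp x < ⊤ := by
    filter_upwards [hCpbound, ae_lt_top hMq hqfin.ne] with x h1 h2
    exact h1.trans_lt (by
      exact ENNReal.add_lt_top.mpr ⟨h2, by norm_num⟩)
  have hCnlt : ∀ᵐ x ∂μ, Cn x < ⊤ := by
    filter_upwards [hCnbound, ae_lt_top hMm hfin.ne] with x h1 h2
    exact h1.trans_lt (ENNReal.add_lt_top.mpr ⟨h2, by norm_num⟩)
  -- Pp finite
  have hPfin : Pp ≠ ⊤ := by
    have : Pp ≤ (∫⁻ x, klDiv (κ x) q ∂μ) + 2 := by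
      rw [hPbind]
      calc ∫⁻ x, Cp x ∂μ ≤ ∫⁻ x, (klDiv (κ x) q + 2) ∂μ := lintegral_mono_ae hCpbound
        _ = (∫⁻ x, klDiv (κ x) q ∂μ) + 2 * μ Set.univ := by
            rw [lintegral_add_right _ measurable_const, lintegral_const]
        _ = (∫⁻ x, klDiv (κ x) q ∂μ) + 2 := by simp
    exact (this.trans_lt (ENNReal.add_lt_top.mpr ⟨hqfin, by norm_num⟩)).ne
  have hNfin : Nn ≠ ⊤ := (hNle.trans_lt ENNReal.one_lt_top).ne
  -- integrability of llr m q w.r.t. m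
  have hillrm : Integrable (llr m q) m := by
    refine ⟨(measurable_llr m q).aestronglyMeasurable, ?_⟩
    have heq : ∫⁻ z, (‖llr m q z‖₊ : ℝ≥0∞) ∂m = Pp + Nn := by
      rw [hPpdef, hNndef, ← lintegral_add_left hmeasp]
      refine lintegral_congr fun z => ?_
      rcases le_total 0 (llr m q z) with h | h
      · rw [← enorm_eq_nnnorm, Real.enorm_eq_ofReal h, ENNReal.ofReal_eq_zero.mpr (neg_nonpos.mpr h), add_zero]
      · rw [ENNReal.ofReal_eq_zero.mpr h, zero_add, ← nnnorm_neg,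
          ← enorm_eq_nnnorm, Real.enorm_eq_ofReal (neg_nonneg.mpr h)]
    show (∫⁻ z, (‖llr m q z‖₊ : ℝ≥0∞) ∂m) < ⊤
    rw [heq]
    exact ENNReal.add_lt_top.mpr ⟨lt_top_iff_ne_top.mpr hPfin, lt_top_iff_ne_top.mpr hNfin⟩
  -- strict positivity
  have hD : 0 < ∫ z, llr m q z ∂m :=
    integral_llr_pos m q hmq hillrm (fun h => hqm h.symm)
  have hsplitD : ∫ z, llr m q z ∂m = Pp.toReal - Nn.toReal :=
    integral_eq_lintegral_pos_part_sub_lintegral_neg_part hillrm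
  have hNP : Nn < Pp := by
    rw [hsplitD] at hD
    exact (ENNReal.toReal_lt_toReal hNfin hPfin).mp (by linarith)
  -- key pointwise identity
  have hkey : ∀ᵐ x ∂μ, klDiv (κ x) q + Cn x = klDiv (κ x) m + Cp x := by
    filter_upwards [haeq, haem, hintc, hchain, hCnlt, hCplt] with x hxq hxm hic hch hcn hcp
    have hcsplit : ∫ z, llr m q z ∂(κ x) = (Cp x).toReal - (Cn x).toReal :=
      integral_eq_lintegral_pos_part_sub_lintegral_neg_part hic
    have habc : ∫ z, llr (κ x) q z ∂(κ x)
        = ∫ z, llr (κ x) m z ∂(κ x) + ∫ z, llr m q z ∂(κ x) := by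
      rw [← integral_add hxm.2 hic]
      refine integral_congr_ae ?_
      filter_upwards [hch] with z hz
      exact hz
    have hgeq : 0 ≤ ∫ z, llr (κ x) q z ∂(κ x) := integral_llr_nonneg' (κ x) q hxq.1 hxq.2
    have hgem : 0 ≤ ∫ z, llr (κ x) m z ∂(κ x) := integral_llr_nonneg' (κ x) m hxm.1 hxm.2
    rw [klDiv_eq_of hxq.1 hxq.2, klDiv_eq_of hxm.1 hxm.2]
    rw [← ENNReal.ofReal_toReal hcn.ne, ← ENNReal.ofReal_toReal hcp.ne,
      ← ENNReal.ofReal_add hgeq ENNReal.toReal_nonneg,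
      ← ENNReal.ofReal_add hgem ENNReal.toReal_nonneg]
    congr 1
    rw [habc, hcsplit]
    ring
  -- sum identity
  have hsum : (∫⁻ x, klDiv (κ x) q ∂μ) + Nn = (∫⁻ x, klDiv (κ x) m ∂μ) + Pp := by
    rw [hNbind, hPbind, ← lintegral_add_left hMq, ← lintegral_add_left hMm]
    exact lintegral_congr_ae hkey
  -- conclude
  set Lq := ∫⁻ x, klDiv (κ x) q ∂μ
  set Lm := ∫⁻ x, klDiv (κ x) m ∂μ
  have hLqfin : Lq ≠ ⊤ := hqfin.ne
  have hLmfin : Lm ≠ ⊤ := hfin.ne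
  have htr : Lq.toReal + Nn.toReal = Lm.toReal + Pp.toReal := by
    rw [← ENNReal.toReal_add hLqfin hNfin, ← ENNReal.toReal_add hLmfin hPfin, hsum]
  have hNPr : Nn.toReal < Pp.toReal := (ENNReal.toReal_lt_toReal hNfin hPfin).mpr hNP
  have : Lm.toReal < Lq.toReal := by linarith
  exact (ENNReal.toReal_lt_toReal hLmfin hLqfin).mp this
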